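/- arXiv:2104.09256 — 6 statements merged into one kernel-verified Lean document; each statement's English description precedes it below -/
import Mathlib

section
/- For any complex parameters A,B,C,D and any point p = (x,y,z) on the smooth locus of S_{A,B,C,D} that is a fixed point of an element γ of the group generated by g_x, g_y, g_z, the determinant of the derivative Dγ(p) (as a map of the tangent space of the surface) equals 1; equivalently, the generators g_x, g_y, g_z preserve the holomorphic 2-form Ω = dx∧dy/(2z+xy-C) on the smooth locus of S_{A,B,C,D}. -/
noncomputable section

/-- g_x = s_z ∘ s_y as a self-map of ℂ³ (here ℂ³ = Fin 3 → ℂ). -/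
def gxE (B C : ℂ) : Function.End (Fin 3 → ℂ) :=
  fun p => ![p 0, -p 1 - p 0 * p 2 + B, p 0 * p 1 + (p 0 ^ 2 - 1) * p 2 + C - B * p 0]

/-- g_y = s_x ∘ s_z as a self-map of ℂ³. -/
def gyE (A C : ℂ) : Function.End (Fin 3 → ℂ) :=
  fun p => ![(p 1 ^ 2 - 1) * p 0 + p 1 * p 2 + A - C * p 1, p 1, -p 1 * p 0 - p 2 + C]

/-- g_z = s_y ∘ s_x as a self-map of ℂ³. -/
def gzE (A B : ℂ) : Function.End (Fin 3 → ℂ) :=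
  fun p => ![-p 0 - p 1 * p 2 + A, p 2 * p 0 + (p 2 ^ 2 - 1) * p 1 + B - A * p 2, p 2]

/-- The affine cubic surface S_{A,B,C,D}. -/
def surf (A B C D : ℂ) : Set (Fin 3 → ℂ) :=
  {p | p 0 ^ 2 + p 1 ^ 2 + p 2 ^ 2 + p 0 * p 1 * p 2
    = A * p 0 + B * p 1 + C * p 2 + D}

/-- The gradient of the defining polynomial of S_{A,B,C,D}. -/
def gradf (A B C : ℂ) (p : Fin 3 → ℂ) : Fin 3 → ℂ :=
  ![2 * p 0 + p 1 * p 2 - A, 2 * p 1 + p 0 * p 2 - B, 2 * p 2 + p 0 * p 1 - C]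

/-! ### Auxiliary machinery -/

/-- The cross product on ℂ³. -/
def cr (v w : Fin 3 → ℂ) : Fin 3 → ℂ :=
  ![v 1 * w 2 - v 2 * w 1, v 2 * w 0 - v 0 * w 2, v 0 * w 1 - v 1 * w 0]

open ContinuousLinearMap in
/-- The Jacobian of g_x at p, as a continuous linear map. -/
def Lgx (B : ℂ) (p : Fin 3 → ℂ) : (Fin 3 → ℂ) →L[ℂ] (Fin 3 → ℂ) :=
  ContinuousLinearMap.pi
    ![proj 0,
      -proj 1 - p 2 • proj 0 - p 0 • proj 2,
      (p 1 + 2 * p 0 * p 2 - B) • proj 0 + p 0 • proj 1 + (p 0 ^ 2 - 1) • proj 2]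

open ContinuousLinearMap in
/-- The Jacobian of g_y at p, as a continuous linear map. -/
def Lgy (C : ℂ) (p : Fin 3 → ℂ) : (Fin 3 → ℂ) →L[ℂ] (Fin 3 → ℂ) :=
  ContinuousLinearMap.pi
    ![(p 1 ^ 2 - 1) • proj 0 + (2 * p 0 * p 1 + p 2 - C) • proj 1 + p 1 • proj 2,
      proj 1,
      -(p 1 • proj 0) - p 0 • proj 1 - proj 2]

open ContinuousLinearMap in
/-- The Jacobian of g_z at p, as a continuous linear map. -/
def Lgz (A : ℂ) (p : Fin 3 → ℂ) : (Fin 3 → ℂ) →L[ℂ] (Fin 3 → ℂ) :=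
  ContinuousLinearMap.pi
    ![-proj 0 - p 2 • proj 1 - p 1 • proj 2,
      p 2 • proj 0 + (p 2 ^ 2 - 1) • proj 1 + (p 0 + 2 * p 1 * p 2 - A) • proj 2,
      proj 2]

lemma Lgx_apply (B : ℂ) (p v : Fin 3 → ℂ) :
    Lgx B p v = ![v 0, -v 1 - p 2 * v 0 - p 0 * v 2,
      (p 1 + 2 * p 0 * p 2 - B) * v 0 + p 0 * v 1 + (p 0 ^ 2 - 1) * v 2] := by
  funext i; fin_cases i <;> simp [Lgx]

lemma Lgy_apply (C : ℂ) (p v : Fin 3 → ℂ) :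
    Lgy C p v = ![(p 1 ^ 2 - 1) * v 0 + (2 * p 0 * p 1 + p 2 - C) * v 1 + p 1 * v 2,
      v 1, -(p 1 * v 0) - p 0 * v 1 - v 2] := by
  funext i; fin_cases i <;> simp [Lgy]

lemma Lgz_apply (A : ℂ) (p v : Fin 3 → ℂ) :
    Lgz A p v = ![-v 0 - p 2 * v 1 - p 1 * v 2,
      p 2 * v 0 + (p 2 ^ 2 - 1) * v 1 + (p 0 + 2 * p 1 * p 2 - A) * v 2, v 2] := by
  funext i; fin_cases i <;> simp [Lgz]

lemma hasD_gx (B C : ℂ) (p : Fin 3 → ℂ) : HasFDerivAt (gxE B C) (Lgx B p) p := by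
  have h0 := hasFDerivAt_apply (𝕜 := ℂ) (0 : Fin 3) p
  have h1 := hasFDerivAt_apply (𝕜 := ℂ) (1 : Fin 3) p
  have h2 := hasFDerivAt_apply (𝕜 := ℂ) (2 : Fin 3) p
  apply hasFDerivAt_pi''
  intro i
  fin_cases i
  · exact h0.congr_fderiv (by ext v; simp [Lgx])
  · have h : HasFDerivAt (fun x : Fin 3 → ℂ => -x 1 - x 0 * x 2 + B) _ p :=
      ((h1.neg).sub (h0.mul h2)).add_const B
    exact h.congr_fderiv (by ext v; simp [Lgx]; ring)
  · have h : HasFDerivAt (fun x : Fin 3 → ℂ =>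
        x 0 * x 1 + (x 0 * x 0 - 1) * x 2 + C - B * x 0) _ p :=
      (((h0.mul h1).add (((h0.mul h0).sub_const 1).mul h2)).add_const C).sub
        (h0.const_mul B)
    have hfun : (fun x : Fin 3 → ℂ => x 0 * x 1 + (x 0 * x 0 - 1) * x 2 + C - B * x 0)
        = fun x : Fin 3 → ℂ => gxE B C x 2 := by
      funext x
      simp only [gxE, Matrix.cons_val_two, Matrix.tail_cons, Matrix.head_cons]; ring
    rw [hfun] at h
    exact h.congr_fderiv (by ext v; simp [Lgx]; ring)

lemma hasD_gy (A C : ℂ) (p : Fin 3 → ℂ) : HasFDerivAt (gyE A C) (Lgy C p) p := by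
  have h0 := hasFDerivAt_apply (𝕜 := ℂ) (0 : Fin 3) p
  have h1 := hasFDerivAt_apply (𝕜 := ℂ) (1 : Fin 3) p
  have h2 := hasFDerivAt_apply (𝕜 := ℂ) (2 : Fin 3) p
  apply hasFDerivAt_pi''
  intro i
  fin_cases i
  · have h : HasFDerivAt (fun x : Fin 3 → ℂ =>
        (x 1 * x 1 - 1) * x 0 + x 1 * x 2 + A - C * x 1) _ p :=
      (((((h1.mul h1).sub_const 1).mul h0).add (h1.mul h2)).add_const A).sub
        (h1.const_mul C)
    have hfun : (fun x : Fin 3 → ℂ => (x 1 * x 1 - 1) * x 0 + x 1 * x 2 + A - C * x 1)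
        = fun x : Fin 3 → ℂ => gyE A C x 0 := by
      funext x
      simp only [gyE, Matrix.cons_val_zero]; ring
    rw [hfun] at h
    exact h.congr_fderiv (by ext v; simp [Lgy]; ring)
  · exact h1.congr_fderiv (by ext v; simp [Lgy])
  · have h : HasFDerivAt (fun x : Fin 3 → ℂ => -(x 1 * x 0) - x 2 + C) _ p :=
      (((h1.mul h0).neg).sub h2).add_const C
    have hfun : (fun x : Fin 3 → ℂ => -(x 1 * x 0) - x 2 + C)
        = fun x : Fin 3 → ℂ => gyE A C x 2 := by
      funext x
      simp only [gyE, Matrix.cons_val_two, Matrix.tail_cons, Matrix.head_cons]; ring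
    rw [hfun] at h
    exact h.congr_fderiv (by ext v; simp [Lgy]; ring)

lemma hasD_gz (A B : ℂ) (p : Fin 3 → ℂ) : HasFDerivAt (gzE A B) (Lgz A p) p := by
  have h0 := hasFDerivAt_apply (𝕜 := ℂ) (0 : Fin 3) p
  have h1 := hasFDerivAt_apply (𝕜 := ℂ) (1 : Fin 3) p
  have h2 := hasFDerivAt_apply (𝕜 := ℂ) (2 : Fin 3) p
  apply hasFDerivAt_pi''
  intro i
  fin_cases i
  · have h : HasFDerivAt (fun x : Fin 3 → ℂ => -x 0 - x 1 * x 2 + A) _ p :=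
      ((h0.neg).sub (h1.mul h2)).add_const A
    exact h.congr_fderiv (by ext v; simp [Lgz]; ring)
  · have h : HasFDerivAt (fun x : Fin 3 → ℂ =>
        x 2 * x 0 + (x 2 * x 2 - 1) * x 1 + B - A * x 2) _ p :=
      (((h2.mul h0).add (((h2.mul h2).sub_const 1).mul h1)).add_const B).sub
        (h2.const_mul A)
    have hfun : (fun x : Fin 3 → ℂ => x 2 * x 0 + (x 2 * x 2 - 1) * x 1 + B - A * x 2)
        = fun x : Fin 3 → ℂ => gzE A B x 1 := by
      funext x
      simp only [gzE, Matrix.cons_val_one, Matrix.head_cons, Matrix.cons_val_zero]; ring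
    rw [hfun] at h
    exact h.congr_fderiv (by ext v; simp [Lgz]; ring)
  · exact h2.congr_fderiv (by ext v; simp [Lgz])

/-! ### The cross-product transformation law for the generators -/

lemma cross_gx (A B C lam : ℂ) (p v w : Fin 3 → ℂ)
    (h : cr v w = lam • gradf A B C p) :
    cr (Lgx B p v) (Lgx B p w) = lam • gradf A B C (gxE B C p) := by
  have h0 := congrFun h 0
  have h1 := congrFun h 1
  have h2 := congrFun h 2
  simp only [cr, gradf, Pi.smul_apply, smul_eq_mul, Matrix.cons_val_zero,
    Matrix.cons_val_one, Matrix.head_cons, Matrix.cons_val_two, Matrix.tail_cons] at h0 h1 h2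
  rw [Lgx_apply, Lgx_apply]
  funext i
  fin_cases i <;>
    simp [cr, gradf, gxE, smul_eq_mul]
  · linear_combination h0 + (-(p 0 ^ 2 * p 2) - p 2 - p 0 * p 1 + B * p 0) * h1
      + (p 0 * p 2 + p 1 - B) * h2
  · linear_combination (p 0 ^ 2 - 1) * h1 + (-(p 0)) * h2
  · linear_combination p 0 * h1 + (-1 : ℂ) * h2

lemma cross_gy (A B C lam : ℂ) (p v w : Fin 3 → ℂ)
    (h : cr v w = lam • gradf A B C p) :
    cr (Lgy C p v) (Lgy C p w) = lam • gradf A B C (gyE A C p) := by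
  have h0 := congrFun h 0
  have h1 := congrFun h 1
  have h2 := congrFun h 2
  simp only [cr, gradf, Pi.smul_apply, smul_eq_mul, Matrix.cons_val_zero,
    Matrix.cons_val_one, Matrix.head_cons, Matrix.cons_val_two, Matrix.tail_cons] at h0 h1 h2
  rw [Lgy_apply, Lgy_apply]
  funext i
  fin_cases i <;>
    simp [cr, gradf, gyE, smul_eq_mul]
  · linear_combination (-1 : ℂ) * h0 + p 1 * h2
  · linear_combination (p 0 * p 1 + p 2 - C) * h0 + h1
      + (-(p 0 * p 1 ^ 2) - p 0 - p 1 * p 2 + C * p 1) * h2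
  · linear_combination (-(p 1)) * h0 + (p 1 ^ 2 - 1) * h2

lemma cross_gz (A B C lam : ℂ) (p v w : Fin 3 → ℂ)
    (h : cr v w = lam • gradf A B C p) :
    cr (Lgz A p v) (Lgz A p w) = lam • gradf A B C (gzE A B p) := by
  have h0 := congrFun h 0
  have h1 := congrFun h 1
  have h2 := congrFun h 2
  simp only [cr, gradf, Pi.smul_apply, smul_eq_mul, Matrix.cons_val_zero,
    Matrix.cons_val_one, Matrix.head_cons, Matrix.cons_val_two, Matrix.tail_cons] at h0 h1 h2
  rw [Lgz_apply, Lgz_apply]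
  funext i
  fin_cases i <;>
    simp [cr, gradf, gzE, smul_eq_mul]
  · linear_combination (p 2 ^ 2 - 1) * h0 + (-(p 2)) * h1
  · linear_combination p 2 * h0 + (-1 : ℂ) * h1
  · linear_combination (-(p 0 * p 2) - p 1 * p 2 ^ 2 + A * p 2 - p 1) * h0
      + (p 0 + p 1 * p 2 - A) * h1 + h2

/-- The main invariance property, which is multiplicative. -/
def Pred (A B C : ℂ) (γ : Function.End (Fin 3 → ℂ)) : Prop :=
  ∀ p : Fin 3 → ℂ, ∃ L : (Fin 3 → ℂ) →L[ℂ] (Fin 3 → ℂ),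
    HasFDerivAt (γ : (Fin 3 → ℂ) → (Fin 3 → ℂ)) L p ∧
    ∀ (lam : ℂ) (v w : Fin 3 → ℂ), cr v w = lam • gradf A B C p →
      cr (L v) (L w) = lam • gradf A B C (γ p)

lemma Pred_one (A B C : ℂ) : Pred A B C 1 := by
  intro p
  refine ⟨ContinuousLinearMap.id ℂ (Fin 3 → ℂ), hasFDerivAt_id p, ?_⟩
  intro lam v w h
  change _ = lam • gradf A B C p
  simpa using h

lemma Pred_mul (A B C : ℂ) (a b : Function.End (Fin 3 → ℂ))
    (ha : Pred A B C a) (hb : Pred A B C b) : Pred A B C (a * b) := by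
  intro p
  obtain ⟨Lb, hLb, keyb⟩ := hb p
  obtain ⟨La, hLa, keya⟩ := ha (b p)
  refine ⟨La.comp Lb, hLa.comp p hLb, ?_⟩
  intro lam v w h
  have h1 := keyb lam v w h
  have h2 := keya lam (Lb v) (Lb w) h1
  change _ = lam • gradf A B C (a (b p))
  simpa using h2

lemma Pred_gx (A B C : ℂ) : Pred A B C (gxE B C) := by
  intro p
  exact ⟨Lgx B p, hasD_gx B C p, fun lam v w h => cross_gx A B C lam p v w h⟩

lemma Pred_gy (A B C : ℂ) : Pred A B C (gyE A C) := by
  intro p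
  exact ⟨Lgy C p, hasD_gy A C p, fun lam v w h => cross_gy A B C lam p v w h⟩

lemma Pred_gz (A B C : ℂ) : Pred A B C (gzE A B) := by
  intro p
  exact ⟨Lgz A p, hasD_gz A B p, fun lam v w h => cross_gz A B C lam p v w h⟩

lemma Pred_closure (A B C : ℂ) (γ : Function.End (Fin 3 → ℂ))
    (hγ : γ ∈ Submonoid.closure ({gxE B C, gyE A C, gzE A B} :
      Set (Function.End (Fin 3 → ℂ)))) : Pred A B C γ := by
  induction hγ using Submonoid.closure_induction with
  | mem g hg =>
    rcases hg with h | h | h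
    · rw [h]; exact Pred_gx A B C
    · rw [h]; exact Pred_gy A B C
    · rw [h]; exact Pred_gz A B C
  | one => exact Pred_one A B C
  | mul a b _ _ ha hb => exact Pred_mul A B C a b ha hb

/-- Tangent vectors give a cross product proportional to the gradient. -/
lemma tangent_cr (A B C : ℂ) (p v w : Fin 3 → ℂ)
    (hNz : 2 * p 2 + p 0 * p 1 - C ≠ 0)
    (hv : (∑ i, gradf A B C p i * v i) = 0)
    (hw : (∑ i, gradf A B C p i * w i) = 0) :
    cr v w = ((v 0 * w 1 - v 1 * w 0) / (2 * p 2 + p 0 * p 1 - C)) • gradf A B C p := by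
  simp only [Fin.sum_univ_three, gradf, Matrix.cons_val_zero, Matrix.cons_val_one,
    Matrix.head_cons, Matrix.cons_val_two, Matrix.tail_cons] at hv hw
  funext i
  fin_cases i
  · simp only [cr, gradf, Pi.smul_apply, smul_eq_mul, Fin.isValue, Fin.zero_eta,
      Matrix.cons_val_zero]
    rw [div_mul_eq_mul_div, eq_div_iff hNz]
    linear_combination v 1 * hw - w 1 * hv
  · simp only [cr, gradf, Pi.smul_apply, smul_eq_mul, Fin.isValue, Fin.mk_one,
      Matrix.cons_val_one, Matrix.head_cons, Matrix.cons_val_zero]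
    rw [div_mul_eq_mul_div, eq_div_iff hNz]
    linear_combination w 0 * hv - v 0 * hw
  · simp only [cr, gradf, Pi.smul_apply, smul_eq_mul, Fin.isValue, Fin.reduceFinMk,
      Matrix.cons_val_two, Matrix.tail_cons, Matrix.head_cons]
    rw [div_mul_eq_mul_div, eq_div_iff hNz]

/-- (1) Every element γ of the group generated by g_x, g_y, g_z has determinant of its
derivative, restricted to the tangent plane of the surface, equal to 1 at every smooth
fixed point on S (expressed, in the chart where the partial ∂f/∂z = 2z+xy-C is nonzero,
as invariance of the area element in the (x,y)-coordinates on tangent vectors);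
equivalently (2) the generators preserve the holomorphic 2-form
Ω = dx∧dy/(2z+xy-C) on the smooth locus. -/
theorem stmt2 (A B C D : ℂ) :
    (∀ γ ∈ Submonoid.closure ({gxE B C, gyE A C, gzE A B} : Set (Function.End (Fin 3 → ℂ))),
      ∀ p ∈ surf A B C D, γ p = p → gradf A B C p ≠ 0 →
        2 * p 2 + p 0 * p 1 - C ≠ 0 →
        ∀ v w : Fin 3 → ℂ,
          (∑ i, gradf A B C p i * v i) = 0 → (∑ i, gradf A B C p i * w i) = 0 →
          (fderiv ℂ (γ : (Fin 3 → ℂ) → (Fin 3 → ℂ)) p v) 0 *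
              (fderiv ℂ (γ : (Fin 3 → ℂ) → (Fin 3 → ℂ)) p w) 1
            - (fderiv ℂ (γ : (Fin 3 → ℂ) → (Fin 3 → ℂ)) p v) 1 *
              (fderiv ℂ (γ : (Fin 3 → ℂ) → (Fin 3 → ℂ)) p w) 0
            = v 0 * w 1 - v 1 * w 0)
    ∧
    (∀ g ∈ ({gxE B C, gyE A C, gzE A B} : Set (Function.End (Fin 3 → ℂ))),
      ∀ p ∈ surf A B C D, gradf A B C p ≠ 0 →
        2 * p 2 + p 0 * p 1 - C ≠ 0 →
        2 * g p 2 + g p 0 * g p 1 - C ≠ 0 →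
        ∀ v w : Fin 3 → ℂ,
          (∑ i, gradf A B C p i * v i) = 0 → (∑ i, gradf A B C p i * w i) = 0 →
          ((fderiv ℂ (g : (Fin 3 → ℂ) → (Fin 3 → ℂ)) p v) 0 *
                (fderiv ℂ (g : (Fin 3 → ℂ) → (Fin 3 → ℂ)) p w) 1
              - (fderiv ℂ (g : (Fin 3 → ℂ) → (Fin 3 → ℂ)) p v) 1 *
                (fderiv ℂ (g : (Fin 3 → ℂ) → (Fin 3 → ℂ)) p w) 0)
              / (2 * g p 2 + g p 0 * g p 1 - C)
            = (v 0 * w 1 - v 1 * w 0) / (2 * p 2 + p 0 * p 1 - C)) := by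
  constructor
  · intro γ hγ p _ hfix _ hNz v w hv hw
    obtain ⟨L, hL, key⟩ := Pred_closure A B C γ hγ p
    set lam := (v 0 * w 1 - v 1 * w 0) / (2 * p 2 + p 0 * p 1 - C) with hlam
    have h := tangent_cr A B C p v w hNz hv hw
    have hk := key lam v w h
    rw [hfix] at hk
    have hk2 := congrFun hk 2
    simp only [cr, gradf, Pi.smul_apply, smul_eq_mul, Matrix.cons_val_zero,
      Matrix.cons_val_one, Matrix.head_cons, Matrix.cons_val_two,
      Matrix.tail_cons] at hk2
    rw [hL.fderiv]
    rw [hk2, hlam, div_mul_cancel₀ _ hNz]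
  · intro g hg p _ _ hNz hNz' v w hv hw
    have hP : Pred A B C g := by
      rcases hg with h | h | h
      · rw [h]; exact Pred_gx A B C
      · rw [h]; exact Pred_gy A B C
      · rw [h]; exact Pred_gz A B C
    obtain ⟨L, hL, key⟩ := hP p
    set lam := (v 0 * w 1 - v 1 * w 0) / (2 * p 2 + p 0 * p 1 - C) with hlam
    have h := tangent_cr A B C p v w hNz hv hw
    have hk := key lam v w h
    have hk2 := congrFun hk 2
    simp only [cr, gradf, Pi.smul_apply, smul_eq_mul, Matrix.cons_val_zero,
      Matrix.cons_val_one, Matrix.head_cons, Matrix.cons_val_two,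
      Matrix.tail_cons] at hk2
    rw [hL.fderiv]
    rw [hk2, mul_div_assoc, div_self hNz', mul_one]

end
end

section
/- For every complex number D ≠ 4, the polynomial p(u) = u³ + 3u² - D has a root u ∈ ℂ with |u| > 2. -/
set_option maxHeartbeats 1600000 in
theorem stmt4 (D : ℂ) (hD : D ≠ 4) :
    ∃ u : ℂ, u ^ 3 + 3 * u ^ 2 - D = 0 ∧ 2 < ‖u‖ := by
  by_contra hcon
  push_neg at hcon
  -- first root via FTA
  obtain ⟨a, ha⟩ : ∃ a : ℂ, a ^ 3 + 3 * a ^ 2 - D = 0 := by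
    have hdeg : (Polynomial.X ^ 3 + Polynomial.C 3 * Polynomial.X ^ 2
        - Polynomial.C D : Polynomial ℂ).degree = 3 := by
      compute_degree!
    obtain ⟨z, hz⟩ := Complex.exists_root
      (f := Polynomial.X ^ 3 + Polynomial.C 3 * Polynomial.X ^ 2 - Polynomial.C D)
      (by rw [hdeg]; norm_num)
    refine ⟨z, ?_⟩
    simpa [Polynomial.IsRoot] using hz
  -- the other two roots via quadratic formula
  obtain ⟨s, hs⟩ := IsAlgClosed.exists_pow_nat_eq ((a + 3) ^ 2 - 4 * (a ^ 2 + 3 * a)) (n := 2)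
    (by norm_num)
  set b : ℂ := (-(a + 3) + s) / 2 with hbdef
  set c : ℂ := (-(a + 3) - s) / 2 with hcdef
  have hb : b ^ 3 + 3 * b ^ 2 - D = 0 := by
    rw [hbdef]; linear_combination ha + (((-(a + 3) + s) / 2 - a) / 4) * hs
  have hc : c ^ 3 + 3 * c ^ 2 - D = 0 := by
    rw [hcdef]; linear_combination ha + (((-(a + 3) - s) / 2 - a) / 4) * hs
  have hsum : a + b + c = -3 := by rw [hbdef, hcdef]; ring
  have hpair : a * b + a * c + b * c = 0 := by
    rw [hbdef, hcdef]; linear_combination (-(1 : ℂ) / 4) * hs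
  have habc : a * b * c = D := by
    rw [hbdef, hcdef]; linear_combination ha - (a / 4) * hs
  -- bounds
  have hA1 : ‖a‖ ≤ 2 := hcon a ha
  have hA2 : ‖b‖ ≤ 2 := hcon b hb
  have hA3 : ‖c‖ ≤ 2 := hcon c hc
  have n1 : a.re ^ 2 + a.im ^ 2 ≤ 4 := by
    have h1 := Complex.sq_norm a
    have h2 := Complex.normSq_apply a
    nlinarith [norm_nonneg a]
  have n2 : b.re ^ 2 + b.im ^ 2 ≤ 4 := by
    have h1 := Complex.sq_norm b
    have h2 := Complex.normSq_apply b
    nlinarith [norm_nonneg b]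
  have n3 : c.re ^ 2 + c.im ^ 2 ≤ 4 := by
    have h1 := Complex.sq_norm c
    have h2 := Complex.normSq_apply c
    nlinarith [norm_nonneg c]
  -- real and imaginary parts of the Vieta relations
  have e1r : a.re + b.re + c.re = -3 := by
    have := congrArg Complex.re hsum; simpa using this
  have e1i : a.im + b.im + c.im = 0 := by
    have := congrArg Complex.im hsum; simpa using this
  have e2r : a.re * b.re - a.im * b.im + (a.re * c.re - a.im * c.im)
      + (b.re * c.re - b.im * c.im) = 0 := by
    have := congrArg Complex.re hpair
    simpa [Complex.mul_re] using this
  have e2i : a.re * b.im + a.im * b.re + (a.re * c.im + a.im * c.re)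
      + (b.re * c.im + b.im * c.re) = 0 := by
    have := congrArg Complex.im hpair
    simpa [Complex.mul_im] using this
  set x1 := a.re; set y1 := a.im
  set x2 := b.re; set y2 := b.im
  set x3 := c.re; set y3 := c.im
  -- sum of squares relation
  have hA : x1 ^ 2 + x2 ^ 2 + x3 ^ 2 - (y1 ^ 2 + y2 ^ 2 + y3 ^ 2) = 9 := by
    linear_combination (x1 + x2 + x3 - 3) * e1r - (y1 + y2 + y3) * e1i - 2 * e2r
  have hx1 : -2 ≤ x1 := by nlinarith [sq_nonneg y1]
  have hx2 : -2 ≤ x2 := by nlinarith [sq_nonneg y2]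
  have hx3 : -2 ≤ x3 := by nlinarith [sq_nonneg y3]
  have ht1 : (0:ℝ) ≤ x1 + 2 := by linarith
  have ht2 : (0:ℝ) ≤ x2 + 2 := by linarith
  have ht3 : (0:ℝ) ≤ x3 + 2 := by linarith
  -- pairwise products of (x_i + 2) equal x_i x_j sums; key equality
  have hkey : (x1 + 2) * (x2 + 2) + (x1 + 2) * (x3 + 2) + (x2 + 2) * (x3 + 2)
      = -(y1 ^ 2 + y2 ^ 2 + y3 ^ 2) / 2 := by
    linear_combination (x1 + x2 + x3 + 5) / 2 * e1r - (1 / 2 : ℝ) * hA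
  have hsle : (x1 + 2) * (x2 + 2) + (x1 + 2) * (x3 + 2) + (x2 + 2) * (x3 + 2) ≤ 0 := by
    rw [hkey]; nlinarith [sq_nonneg y1, sq_nonneg y2, sq_nonneg y3]
  have h12 : (x1 + 2) * (x2 + 2) = 0 :=
    le_antisymm (by linarith [mul_nonneg ht1 ht3, mul_nonneg ht2 ht3]) (mul_nonneg ht1 ht2)
  have h13 : (x1 + 2) * (x3 + 2) = 0 :=
    le_antisymm (by linarith [mul_nonneg ht1 ht2, mul_nonneg ht2 ht3]) (mul_nonneg ht1 ht3)
  have h23 : (x2 + 2) * (x3 + 2) = 0 :=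
    le_antisymm (by linarith [mul_nonneg ht1 ht2, mul_nonneg ht1 ht3]) (mul_nonneg ht2 ht3)
  have hyzero : y1 ^ 2 + y2 ^ 2 + y3 ^ 2 = 0 := by
    have := hkey
    rw [h12, h13, h23] at this
    linarith
  have hy1 : y1 = 0 := by
    have h : y1 ^ 2 = 0 := le_antisymm (by nlinarith [sq_nonneg y2, sq_nonneg y3]) (sq_nonneg y1)
    exact pow_eq_zero_iff (two_ne_zero) |>.mp h
  have hy2 : y2 = 0 := by
    have h : y2 ^ 2 = 0 := le_antisymm (by nlinarith [sq_nonneg y1, sq_nonneg y3]) (sq_nonneg y2)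
    exact pow_eq_zero_iff (two_ne_zero) |>.mp h
  have hy3 : y3 = 0 := by
    have h : y3 ^ 2 = 0 := le_antisymm (by nlinarith [sq_nonneg y1, sq_nonneg y2]) (sq_nonneg y3)
    exact pow_eq_zero_iff (two_ne_zero) |>.mp h
  have hxprod : x1 * x2 * x3 = 4 := by
    linear_combination x3 * h12 - 2 * h13 - 2 * h23 + 4 * e1r
  apply hD
  have haR : a = (x1 : ℂ) := Complex.ext rfl (by simpa using hy1)
  have hbR : b = (x2 : ℂ) := Complex.ext rfl (by simpa using hy2)
  have hcR : c = (x3 : ℂ) := Complex.ext rfl (by simpa using hy3)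
  rw [← habc, haR, hbR, hcR]
  norm_cast
end

section
/- For any real a ∈ (-2,2), the polynomial p_a(u) = u³ + 3u² - 3(2a+4)u + a² + 8a + 8 has a real root u₀ < -(2 + √(2a+4)). -/
theorem stmt5 (a : ℝ) (ha : a ∈ Set.Ioo (-2 : ℝ) 2) :
    ∃ u₀ : ℝ, u₀ ^ 3 + 3 * u₀ ^ 2 - 3 * (2 * a + 4) * u₀ + a ^ 2 + 8 * a + 8 = 0 ∧
      u₀ < -(2 + Real.sqrt (2 * a + 4)) := by
  obtain ⟨ha1, ha2⟩ := ha
  set s := Real.sqrt (2 * a + 4) with hs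
  have hpos : (0:ℝ) < 2 * a + 4 := by linarith
  have hs2 : s ^ 2 = 2 * a + 4 := Real.sq_sqrt (le_of_lt hpos)
  have hs0 : 0 < s := Real.sqrt_pos.mpr hpos
  have hs3 : s < 3 := by nlinarith
  set f : ℝ → ℝ := fun u => u ^ 3 + 3 * u ^ 2 - 3 * (2 * a + 4) * u + a ^ 2 + 8 * a + 8 with hf
  have hcont : ContinuousOn f (Set.Icc (-100) (-(2 + s))) := by
    apply Continuous.continuousOn; fun_prop
  have hle : (-100 : ℝ) ≤ -(2 + s) := by linarith
  have hfa : f (-100) < 0 := by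
    simp only [hf]
    nlinarith
  have hfb : 0 < f (-(2 + s)) := by
    simp only [hf]
    nlinarith [sq_nonneg s, sq_nonneg (s*s), pow_pos hs0 3]
  have : (0:ℝ) ∈ f '' Set.Ioo (-100) (-(2+s)) := intermediate_value_Ioo hle hcont ⟨hfa, hfb⟩
  obtain ⟨u₀, hu₀, hfu₀⟩ := this
  exact ⟨u₀, hfu₀, hu₀.2⟩
end

section
/- For the Picard parameters (A,B,C,D) = (0,0,0,4), the semiconjugacy Φ∘η_M = f_M∘Φ holds for each generator: with Φ(u,v) = (-u-1/u, -v-1/v, -u/v-v/u), the monomial map η(u,v) = (u, u⁻²v) satisfies Φ∘η = g_x∘Φ, where g_x(x,y,z) = (x, -y-xz, xy+(x²-1)z). -/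
noncomputable section

/-- The map Φ : ℂ*×ℂ* → S_{0,0,0,4}. -/
def PhiMap : ℂ × ℂ → ℂ × ℂ × ℂ :=
  fun p => (-p.1 - 1 / p.1, -p.2 - 1 / p.2, -p.1 / p.2 - p.2 / p.1)

/-- The monomial map associated with the matrix [[1,0],[-2,1]] ∈ Γ(2). -/
def etaMap : ℂ × ℂ → ℂ × ℂ :=
  fun p => (p.1, p.1⁻¹ ^ 2 * p.2)

/-- g_x with parameters A = B = C = 0. -/
def gx0 : ℂ × ℂ × ℂ → ℂ × ℂ × ℂ :=
  fun p => (p.1, -p.2.1 - p.1 * p.2.2, p.1 * p.2.1 + (p.1 ^ 2 - 1) * p.2.2)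

/-- The semiconjugacy Φ∘η = g_x∘Φ on ℂ*×ℂ* for the Picard parameters. -/
theorem stmt13 (u v : ℂ) (hu : u ≠ 0) (hv : v ≠ 0) :
    PhiMap (etaMap (u, v)) = gx0 (PhiMap (u, v)) := by
  simp only [PhiMap, etaMap, gx0]
  refine Prod.ext rfl (Prod.ext ?_ ?_) <;> field_simp <;> ring

end
end

section
/- The set of eigendirections in ℙ¹(ℝ) of hyperbolic elements of the congruence subgroup Γ(2) ≤ SL(2,ℤ) is dense in ℙ¹(ℝ). -/
private theorem consec' (n : ℕ) (hn : 2 ≤ n) : ¬IsSquare n ∨ ¬IsSquare (n+1) := by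
  by_contra h
  push_neg at h
  obtain ⟨⟨u, hu⟩, ⟨v, hv⟩⟩ := h
  have hu2 : 2 ≤ u := by nlinarith
  have : v ≤ u := by nlinarith
  nlinarith

private theorem approx' (r δ : ℝ) (hr : 0 ≤ r) (hδ : 0 < δ) :
    ∃ (p K : ℕ), 2 ≤ p ∧ 1 ≤ K ∧ ¬IsSquare p ∧
      r ≤ Real.sqrt p / K ∧ Real.sqrt p / K < r + δ := by
  obtain ⟨K, hK⟩ := exists_nat_gt (2 / δ)
  have hK0 : (0:ℝ) < K := lt_of_le_of_lt (by positivity) hK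
  have hK1 : 1 ≤ K := by exact_mod_cast Nat.one_le_iff_ne_zero.mpr (by rintro rfl; simp at hK0)
  set n : ℕ := ⌊r^2 * K^2⌋₊ + 2 with hn
  have hn2 : 2 ≤ n := le_add_self
  have hnlb : r^2 * K^2 < n := by
    have := Nat.lt_floor_add_one (r^2 * K^2)
    push_cast [hn]
    linarith
  have hδK : 2 < δ * K := by
    rw [div_lt_iff₀ hδ] at hK; linarith [hK]
  have key : ∀ p : ℕ, n ≤ p → p ≤ n + 1 →
      r ≤ Real.sqrt p / K ∧ Real.sqrt p / K < r + δ := by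
    intro p h1 h2
    constructor
    · rw [le_div_iff₀ hK0]
      rw [← Real.sqrt_sq (by positivity : (0:ℝ) ≤ r * K)]
      apply Real.sqrt_le_sqrt
      have : (n:ℝ) ≤ p := by exact_mod_cast h1
      nlinarith
    · rw [div_lt_iff₀ hK0]
      have hfl : (⌊r^2 * K^2⌋₊ : ℝ) ≤ r^2 * K^2 := Nat.floor_le (by positivity)
      have hub : (p:ℝ) < (r*K + δ*K)^2 := by
        have : (p:ℝ) ≤ n + 1 := by exact_mod_cast h2
        have hnr : (n:ℝ) = ⌊r^2 * K^2⌋₊ + 2 := by exact_mod_cast hn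
        nlinarith [mul_nonneg (mul_nonneg hr hK0.le) (mul_pos hδ hK0).le]
      have h1' : Real.sqrt p < r*K + δ*K := by
        rw [← Real.sqrt_sq (by positivity : (0:ℝ) ≤ r*K + δ*K)]
        exact Real.sqrt_lt_sqrt (by positivity) hub
      linarith [h1']
  obtain hns | hns := consec' n hn2
  · exact ⟨n, K, hn2, hK1, hns, key n le_rfl (Nat.le_succ n)⟩
  · exact ⟨n+1, K, le_trans hn2 (Nat.le_succ n), hK1, hns, key (n+1) (Nat.le_succ n) le_rfl⟩

private theorem pell_aux' (p K : ℕ) (hp2 : 2 ≤ p) (hK1 : 1 ≤ K) (hns : ¬IsSquare p) :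
    ∃ X k : ℤ, Odd X ∧ 3 ≤ X ∧ 1 ≤ k ∧ X^2 = 4*p*K^2*k^2 + 1 := by
  have hp' : (2:ℤ) ≤ p := by exact_mod_cast hp2
  have hK' : (1:ℤ) ≤ K := by exact_mod_cast hK1
  have hd0 : (0:ℤ) < 4*p*K^2 := by positivity
  have hdns : ¬IsSquare ((4*p*K^2 : ℤ)) := by
    have h : (4*(p:ℤ)*K^2) = (2*K)^2 * p := by ring
    rw [h]
    rintro ⟨c, hc⟩
    have hK0 : (2*(K:ℤ)) ≠ 0 := by intro h'; nlinarith
    have h2K : (2*(K:ℤ)) ∣ c := by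
      have : (2*(K:ℤ))^2 ∣ c^2 := ⟨p, by rw [sq c, ← hc]⟩
      exact (Int.pow_dvd_pow_iff two_ne_zero).mp this
    obtain ⟨e, he⟩ := h2K
    have : IsSquare ((p:ℤ)) := by
      refine ⟨e, ?_⟩
      have heq : (2*(K:ℤ))^2 * (p:ℤ) = (2*K)^2 * (e*e) := by rw [hc, he]; ring
      exact mul_left_cancel₀ (pow_ne_zero 2 hK0) heq
    exact hns (Int.isSquare_natCast_iff.mp this)
  obtain ⟨x, y, hxy, hy⟩ := Pell.exists_of_not_isSquare hd0 hdns
  have hy1 : 1 ≤ |y| := Int.one_le_abs (by exact_mod_cast hy)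
  have heq : |x|^2 = 4*p*K^2*|y|^2 + 1 := by rw [sq_abs, sq_abs]; linarith
  have hK2 : (1:ℤ) ≤ (K:ℤ)^2 := by nlinarith
  have hy2 : (1:ℤ) ≤ |y|^2 := by nlinarith
  have h8 : (8:ℤ) ≤ 4*p*K^2*|y|^2 := by
    have h1 : (1:ℤ)*1 ≤ (K:ℤ)^2*|y|^2 := mul_le_mul hK2 hy2 zero_le_one (by positivity)
    have h2 : (2:ℤ)*1 ≤ (p:ℤ)*((K:ℤ)^2*|y|^2) := mul_le_mul hp' (by linarith) (by linarith) (by linarith)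
    nlinarith
  refine ⟨|x|, |y|, ?_, ?_, hy1, heq⟩
  · have hodd : Odd (|x|^2) := ⟨2*p*K^2*|y|^2, by linarith⟩
    rcases Int.even_or_odd |x| with he | ho
    · exact absurd ((Int.even_pow' two_ne_zero).mpr he) (Int.not_even_iff_odd.mpr hodd)
    · exact ho
  · nlinarith [abs_nonneg x]

private theorem build' (p K : ℕ) (σ : ℤ) (hσ : σ * σ = 1) (hp2 : 2 ≤ p) (hK1 : 1 ≤ K)
    (hns : ¬IsSquare p) :
    ∃ (M : Matrix (Fin 2) (Fin 2) ℤ) (c : ℝ),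
      (M.det = 1 ∧ Odd (M 0 0) ∧ Odd (M 1 1) ∧ Even (M 0 1) ∧ Even (M 1 0)) ∧
      2 < |M 0 0 + M 1 1| ∧
      (M.map (Int.cast : ℤ → ℝ)).mulVec ![(K:ℝ), (σ:ℝ) * Real.sqrt p]
        = c • ![(K:ℝ), (σ:ℝ) * Real.sqrt p] := by
  obtain ⟨X, k, hXodd, hX3, hk1, hXeq⟩ := pell_aux' p K hp2 hK1 hns
  have hp0 : (0:ℝ) ≤ (p:ℝ) := by positivity
  have hsp : Real.sqrt p * Real.sqrt p = (p:ℝ) := Real.mul_self_sqrt hp0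
  have hσR : ((σ:ℝ)) * ((σ:ℝ)) = 1 := by exact_mod_cast hσ
  refine ⟨!![X, σ*(2*K^2*k); σ*(2*p*k), X], (X:ℝ) + 2*k*K*Real.sqrt p,
    ⟨?_, ?_, ?_, ?_, ?_⟩, ?_, ?_⟩
  · rw [Matrix.det_fin_two_of]
    linear_combination hXeq - (4*(p:ℤ)*K^2*k^2) * hσ
  · simpa using hXodd
  · simpa using hXodd
  · exact ⟨σ*(K^2*k), by simp; ring⟩
  · exact ⟨σ*(p*k), by simp; ring⟩
  · have e0 : (!![X, σ*(2*K^2*k); σ*(2*p*k), X] : Matrix (Fin 2) (Fin 2) ℤ) 0 0 = X := rfl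
    have e1 : (!![X, σ*(2*K^2*k); σ*(2*p*k), X] : Matrix (Fin 2) (Fin 2) ℤ) 1 1 = X := rfl
    rw [e0, e1, abs_of_pos (by linarith)]
    linarith
  · have hXR : (X:ℝ)^2 = 4*p*K^2*k^2 + 1 := by exact_mod_cast hXeq
    funext i
    fin_cases i <;>
      simp [Matrix.mulVec, dotProduct, Fin.sum_univ_two] <;>
      push_cast <;> ring_nf
    · linear_combination (2*(K:ℝ)^2*(k:ℝ)*Real.sqrt p) * hσR
    · have hsp2 : Real.sqrt p ^ 2 = (p:ℝ) := Real.sq_sqrt hp0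
      linear_combination (-2*(σ:ℝ)*(k:ℝ)*(K:ℝ)) * hsp2

/-- Membership in the congruence subgroup Γ(2) ≤ SL(2,ℤ): determinant 1,
odd diagonal entries, even off-diagonal entries. -/
def inGamma2 (M : Matrix (Fin 2) (Fin 2) ℤ) : Prop :=
  M.det = 1 ∧ Odd (M 0 0) ∧ Odd (M 1 1) ∧ Even (M 0 1) ∧ Even (M 1 0)

/-- The eigendirections of hyperbolic elements of Γ(2) are dense in ℙ¹(ℝ):
for every nonzero direction w and every ε > 0 there is a hyperbolic M ∈ Γ(2)
with a real eigenvector x some scalar multiple of which is ε-close to w. -/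
theorem stmt14 :
    ∀ w : Fin 2 → ℝ, w ≠ 0 → ∀ ε : ℝ, 0 < ε →
      ∃ (M : Matrix (Fin 2) (Fin 2) ℤ) (x : Fin 2 → ℝ) (c t : ℝ),
        inGamma2 M ∧ 2 < |M 0 0 + M 1 1| ∧ x ≠ 0 ∧
        (M.map (Int.cast : ℤ → ℝ)).mulVec x = c • x ∧
        ‖t • x - w‖ < ε := by
  intro w hw ε hε
  by_cases hw0 : w 0 = 0
  · -- vertical direction
    have hw1 : w 1 ≠ 0 := by
      intro h; apply hw; funext i; fin_cases i <;> simp [hw0, h]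
    obtain ⟨p, K, hp2, hK1, hns, hlo, hhi⟩ :=
      approx' (|w 1| / ε + 1) 1 (by positivity) one_pos
    obtain ⟨M, c, hG, htr, heig⟩ := build' p K 1 (by ring) hp2 hK1 hns
    have hpR : (0:ℝ) < Real.sqrt p := Real.sqrt_pos.mpr (by
      have : (2:ℝ) ≤ p := by exact_mod_cast hp2
      linarith)
    have hKR : (0:ℝ) < K := by exact_mod_cast hK1
    refine ⟨M, _, c, w 1 / Real.sqrt p, hG, htr, ?_, heig, ?_⟩
    · intro h
      have := congrFun h 1
      simp at this
      exact absurd this (by positivity)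
    · rw [pi_norm_lt_iff hε]
      intro i
      have hr1 : |w 1| / ε < Real.sqrt p / K := by linarith
      fin_cases i <;> simp [hw0]
      · -- |w1| / |√p| * K < ε
        rw [abs_of_pos hpR, div_mul_eq_mul_div, div_lt_iff₀ hpR]
        have h2 : |w 1| * K < Real.sqrt p * ε := by
          rw [div_lt_div_iff₀ hε hKR] at hr1
          linarith
        linarith
      · -- second component zero
        have hz : w 1 / Real.sqrt p * Real.sqrt p - w 1 = 0 := by
          field_simp; ring
        rw [hz]
        simpa using hε
  · -- generic direction
    set s : ℝ := w 1 / w 0 with hs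
    set σ : ℤ := if s < 0 then -1 else 1 with hσdef
    have hσ : σ * σ = 1 := by rw [hσdef]; split_ifs <;> ring
    have hW0 : 0 < |w 0| := abs_pos.mpr hw0
    have hδ : 0 < ε / |w 0| := by positivity
    obtain ⟨p, K, hp2, hK1, hns, hlo, hhi⟩ := approx' |s| (ε / |w 0|) (abs_nonneg s) hδ
    obtain ⟨M, c, hG, htr, heig⟩ := build' p K σ hσ hp2 hK1 hns
    have hKR : (0:ℝ) < K := by exact_mod_cast hK1
    refine ⟨M, _, c, w 0 / K, hG, htr, ?_, heig, ?_⟩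
    · intro h
      have h0 := congrFun h 0
      simp at h0
      exact hKR.ne' (by exact_mod_cast h0)
    · have key : |((σ:ℝ)) * Real.sqrt p / K - s| < ε / |w 0| := by
        rw [hσdef]
        split_ifs with hneg
        · rw [abs_of_neg hneg] at hlo hhi
          push_cast
          rw [abs_lt]
          constructor <;> · ring_nf at hlo hhi ⊢; linarith
        · rw [abs_of_nonneg (not_lt.mp hneg)] at hlo hhi
          push_cast
          rw [abs_lt]
          constructor <;> · ring_nf at hlo hhi ⊢; linarith
      rw [pi_norm_lt_iff hε]
      intro i
      fin_cases i <;> simp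
      · have h0 : w 0 / K * K - w 0 = 0 := by field_simp; ring
        rw [h0]
        simpa using hε
      · have heq2 : w 0 / K * ((σ:ℝ) * Real.sqrt p) - w 1
            = w 0 * ((σ:ℝ) * Real.sqrt p / K - s) := by
          rw [hs]; field_simp
        rw [heq2, abs_mul]
        calc |w 0| * |(σ:ℝ) * Real.sqrt p / K - s| < |w 0| * (ε / |w 0|) :=
              mul_lt_mul_of_pos_left key hW0
          _ = ε := by field_simp
end

section
/- Let A,B,C ∈ ℂ, r = max{|A|,|B|,|C|}, R > 2+√r, and ε = min{R-(2+√r), R+1-√(4R+r+1)}. Then ε > 0, and for any point q = (x,y,z) ∈ ℂ³ with |x-u| < ε, |y-u| < ε, |z-u| < ε for some u with |u| = R, the point s_x(q) = (-x-yz+A, y, z) satisfies |−x−yz+A| > (R-ε)² - (R+ε) - r ≥ R+ε > |x|; i.e., applying s_x strictly increases the modulus of the x-coordinate. -/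
/-- Base estimate for the Bowditch region: with r = max{|A|,|B|,|C|}, R > 2+√r and
ε = min{R-(2+√r), R+1-√(4R+r+1)}, one has ε > 0, and for any point (x,y,z) in the
ε-polydisc around (u,u,u) with |u| = R, the new x-coordinate -x-yz+A of s_x(x,y,z)
satisfies |-x-yz+A| > (R-ε)² - (R+ε) - r ≥ R+ε > |x|. -/
theorem stmt18 (A B C : ℂ) (R r ε : ℝ)
    (hr : r = max (‖A‖) (max (‖B‖) (‖C‖)))
    (hR : 2 + Real.sqrt r < R)
    (hε : ε = min (R - (2 + Real.sqrt r)) (R + 1 - Real.sqrt (4 * R + r + 1))) :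
    0 < ε ∧
    ∀ u x y z : ℂ, ‖u‖ = R →
      ‖x - u‖ < ε → ‖y - u‖ < ε → ‖z - u‖ < ε →
      ‖-x - y * z + A‖ > (R - ε) ^ 2 - (R + ε) - r ∧
      (R - ε) ^ 2 - (R + ε) - r ≥ R + ε ∧
      R + ε > ‖x‖ := by
  have hA : ‖A‖ ≤ r := hr ▸ le_max_left _ _
  have hr0 : 0 ≤ r := le_trans (norm_nonneg A) hA
  have hs0 : 0 ≤ Real.sqrt r := Real.sqrt_nonneg r
  have hs2 : Real.sqrt r ^ 2 = r := Real.sq_sqrt hr0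
  have h4 : 0 ≤ 4 * R + r + 1 := by nlinarith
  have ht0 : 0 ≤ Real.sqrt (4 * R + r + 1) := Real.sqrt_nonneg _
  have ht2 : Real.sqrt (4 * R + r + 1) ^ 2 = 4 * R + r + 1 := Real.sq_sqrt h4
  have hεpos : 0 < ε := by
    rw [hε]
    apply lt_min
    · linarith
    · nlinarith
  have hε1 : ε ≤ R - (2 + Real.sqrt r) := hε ▸ min_le_left _ _
  have hε2 : ε ≤ R + 1 - Real.sqrt (4 * R + r + 1) := hε ▸ min_le_right _ _
  have hmid : (R - ε) ^ 2 - (R + ε) - r ≥ R + ε := by nlinarith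
  have hRε : 0 < R - ε := by linarith
  refine ⟨hεpos, fun u x y z hu hx hy hz => ?_⟩
  have hxR : ‖x‖ < R + ε := by
    have h := norm_add_le (x - u) u
    simp only [sub_add_cancel] at h
    rw [hu] at h
    linarith
  have key : ∀ w : ℂ, ‖w - u‖ < ε → R - ε < ‖w‖ := by
    intro w hw
    have h := norm_add_le w (u - w)
    simp only [add_sub_cancel] at h
    rw [hu] at h
    rw [norm_sub_rev] at hw
    linarith
  have hyR := key y hy
  have hzR := key z hz
  have hyz : (R - ε) ^ 2 < ‖y * z‖ := by
    rw [norm_mul]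
    nlinarith
  have h1 : ‖y * z‖ - ‖x - A‖ ≤ ‖-x - y * z + A‖ := by
    have := norm_sub_norm_le (-(y * z)) (x - A)
    have heq : -(y * z) - (x - A) = -x - y * z + A := by ring
    rw [heq] at this
    simpa using this
  have h2 : ‖x - A‖ ≤ ‖x‖ + ‖A‖ := norm_sub_le x A
  constructor
  · have := h1
    nlinarith
  · exact ⟨hmid, hxR⟩
end
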